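/- For any tree graph T on the vertex set {0,1,…,n} with n ≥ 1, the normalized volume of its adjacency polytope equals 2^n; that is, NVol_n(∇_T) = 2^n. -/

import Mathlib

open MeasureTheory SimpleGraph Matrix Polynomial Real Finset

/-- The standard "vertex embedding": vertex `0` of the graph maps to the origin of `ℝ^n`,
and vertex `i ≥ 1` maps to the standard basis vector `e_i`. -/
noncomputable def graphVert (n : ℕ) (i : Fin (n + 1)) : Fin n → ℝ :=
  if h : i = 0 then 0 else Pi.single (i.pred h) 1

/-- The adjacency polytope `∇_G = conv{±(e_i - e_j) : {i,j} ∈ E(G)}` of a graph `G`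
on the vertex set `{0, 1, …, n}`. -/
noncomputable def adjPolytope (n : ℕ) (G : SimpleGraph (Fin (n + 1))) : Set (Fin n → ℝ) :=
  convexHull ℝ {v | ∃ i j : Fin (n + 1), G.Adj i j ∧ v = graphVert n i - graphVert n j}



open MeasureTheory SimpleGraph

/-- Parent function for a tree rooted at 0. -/
lemma tree_parent_exists (n : ℕ) (T : SimpleGraph (Fin (n + 1))) (hT : T.IsTree) :
    ∃ p : Fin (n+1) → Fin (n+1), p 0 = 0 ∧ (∀ i, i ≠ 0 → T.Adj i (p i)) ∧
      (∀ i j, T.Adj i j → (i ≠ 0 ∧ p i = j) ∨ (j ≠ 0 ∧ p j = i)) ∧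
      (∀ i, p^[n] i = 0) := by
  classical
  have hU := hT.existsUnique_path
  set W : ∀ i : Fin (n+1), T.Walk i 0 := fun i => (hU i 0).choose with hW
  have hWp : ∀ i, (W i).IsPath := fun i => (hU i 0).choose_spec.1
  have hWu : ∀ i (q : T.Walk i 0), q.IsPath → q = W i :=
    fun i q hq => (hU i 0).unique hq (hWp i)
  set p : Fin (n+1) → Fin (n+1) := fun i => (W i).getVert 1 with hp
  -- W 0 = nil
  have hW0 : W 0 = SimpleGraph.Walk.nil := ((hU 0 0).unique Walk.IsPath.nil (hWp 0)).symm
  have hp0 : p 0 = 0 := by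
    simp only [hp, hW0]
    exact Walk.getVert_of_length_le _ (by simp)
  -- structure of W i for i ≠ 0
  have hstep : ∀ i, i ≠ 0 → ∃ (h : T.Adj i (p i)) (q : T.Walk (p i) 0),
      W i = Walk.cons h q ∧ q = W (p i) := by
    intro i hi
    obtain ⟨j, h, q, hq⟩ := Walk.exists_eq_cons_of_ne (by exact hi) (W i)
    have hgj : p i = j := by simp [hp, hq, Walk.getVert_cons_succ]
    subst hgj
    refine ⟨h, q, hq, ?_⟩
    refine hWu _ q ?_
    have := hWp i; rw [hq] at this; exact this.of_cons
  -- adjacency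
  have hadj : ∀ i, i ≠ 0 → T.Adj i (p i) := fun i hi => (hstep i hi).choose
  -- length decreases
  have hlen : ∀ i, i ≠ 0 → (W (p i)).length + 1 = (W i).length := by
    intro i hi
    obtain ⟨h, q, hq, hq'⟩ := hstep i hi
    rw [hq, ← hq']
    simp
  have hlen0 : ∀ i, (W i).length = 0 → i = 0 := by
    intro i h
    have := Walk.eq_of_length_eq_zero h
    exact this
  -- iterate reaches 0
  have hiter : ∀ m i, (W i).length ≤ m → p^[m] i = 0 := by
    intro m
    induction m with
    | zero => intro i h; exact hlen0 i (Nat.le_zero.mp h)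
    | succ m ih =>
      intro i h
      by_cases hi : i = 0
      · subst hi; rw [Function.iterate_fixed hp0]
      · rw [Function.iterate_succ_apply]
        have := hlen i hi
        exact ih _ (by omega)
  -- edge classification
  have hedge : ∀ i j, T.Adj i j → (i ≠ 0 ∧ p i = j) ∨ (j ≠ 0 ∧ p j = i) := by
    intro i j hij
    by_cases hmem : i ∈ (W j).support
    · right
      have hj : j ≠ 0 := by
        rintro rfl
        rw [hW0] at hmem
        simp at hmem
        exact T.loopless.irrefl i (hmem ▸ hij)
      refine ⟨hj, ?_⟩
      -- takeUntil is the unique path from j to i, which is the single edge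
      have htake : ((W j).takeUntil i hmem).IsPath := (hWp j).takeUntil hmem
      have hsingle : ((SimpleGraph.Path.singleton hij.symm : T.Path j i) : T.Walk j i).IsPath :=
        (SimpleGraph.Path.singleton hij.symm).2
      have heq : (W j).takeUntil i hmem = (SimpleGraph.Path.singleton hij.symm : T.Walk j i) :=
        (hT.existsUnique_path j i).unique htake hsingle
      have hspec := (W j).take_spec hmem
      rw [heq] at hspec
      have h2 := congrArg (fun w : T.Walk j 0 => w.getVert 1) hspec
      simp only [SimpleGraph.Path.singleton, Walk.cons_append, Walk.nil_append,
        Walk.getVert_cons_succ] at h2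
      simp [hp, ← h2]
    · left
      have hi : i ≠ 0 := by
        rintro rfl
        exact hmem ((W j).end_mem_support)
      refine ⟨hi, ?_⟩
      have hcons : (Walk.cons hij (W j)).IsPath := (hWp j).cons hmem
      have heq : Walk.cons hij (W j) = W i := hWu i _ hcons
      simp [hp, ← heq, Walk.getVert_cons_succ]
  -- length bound
  have hbound : ∀ i, (W i).length ≤ n := by
    intro i
    have := (hWp i).length_lt
    simpa [Fintype.card_fin] using Nat.lt_succ_iff.mp (by simpa using this)
  exact ⟨p, hp0, hadj, hedge, fun i => hiter n i (hbound i)⟩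

open Matrix Polynomial

lemma map_charmatrix_eval_one {m : ℕ} (P : Matrix (Fin m) (Fin m) ℝ) :
    (charmatrix P).map (Polynomial.evalRingHom (1:ℝ)) = 1 - P := by
  ext i j
  by_cases h : i = j
  · subst h; simp [charmatrix_apply_eq]
  · simp [charmatrix_apply_ne _ _ _ h, Matrix.one_apply_ne h]

lemma det_one_sub_of_nilpotent {m : ℕ} (P : Matrix (Fin m) (Fin m) ℝ) (h : IsNilpotent P) :
    (1 - P).det = 1 := by
  have hc : P.charpoly = X ^ m := by
    have h0 : P.charpoly - X ^ (Fintype.card (Fin m)) = 0 :=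
      (Matrix.isNilpotent_charpoly_sub_pow_of_isNilpotent h).eq_zero
    rw [Fintype.card_fin] at h0
    linear_combination h0
  have h1 := congrArg (Polynomial.eval (1 : ℝ)) hc
  rw [Matrix.charpoly] at h1
  have h2 : eval 1 P.charmatrix.det = ((charmatrix P).map (Polynomial.evalRingHom (1:ℝ))).det := by
    exact RingHom.map_det (Polynomial.evalRingHom (1:ℝ)) (charmatrix P)
  rw [h2, map_charmatrix_eval_one] at h1
  simpa using h1

open Matrix

lemma parentMatrix_pow (n : ℕ) (p : Fin (n+1) → Fin (n+1)) (hp0 : p 0 = 0) (m : ℕ) :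
    (fun (P : Matrix (Fin n) (Fin n) ℝ) => P ^ m)
      (Matrix.of fun j k => if p k.succ = j.succ then (1:ℝ) else 0) =
    Matrix.of (fun j k => if p^[m] k.succ = j.succ then (1:ℝ) else 0) := by
  simp only
  set P : Matrix (Fin n) (Fin n) ℝ := Matrix.of fun j k => if p k.succ = j.succ then (1:ℝ) else 0
  induction m with
  | zero =>
    ext j k
    simp only [pow_zero, Function.iterate_zero, id_eq, Matrix.of_apply]
    rw [Matrix.one_apply]
    simp [Fin.succ_inj, eq_comm]
  | succ m ih =>
    ext j k
    rw [pow_succ, Matrix.mul_apply]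
    simp only [ih, Matrix.of_apply]
    by_cases h0 : p k.succ = 0
    · rw [Finset.sum_eq_zero]
      · rw [Function.iterate_succ_apply, h0, Function.iterate_fixed hp0]
        simp [(Fin.succ_ne_zero j).symm]
      · intro l _
        have : p k.succ ≠ l.succ := by rw [h0]; exact (Fin.succ_ne_zero l).symm
        simp [P, this]
    · set l₀ := (p k.succ).pred h0 with hl₀
      have hsucc : l₀.succ = p k.succ := Fin.succ_pred _ _
      rw [Finset.sum_eq_single l₀]
      · rw [Function.iterate_succ_apply, ← hsucc]
        simp [P, hsucc]
      · intro l _ hl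
        have : p k.succ ≠ l.succ := by
          rw [← hsucc]; exact fun h => hl (Fin.succ_injective _ h.symm) |>.elim
        simp [P, this]
      · intro h; exact absurd (Finset.mem_univ l₀) h

open Finset

lemma convexHull_cross (n : ℕ) (hn : 1 ≤ n) :
    convexHull ℝ {x : Fin n → ℝ | ∃ k, x = Pi.single k 1 ∨ x = -Pi.single k 1} =
      {x : Fin n → ℝ | ∑ i, |x i| ≤ 1} := by
  set D : Set (Fin n → ℝ) := {x | ∃ k, x = Pi.single k 1 ∨ x = -Pi.single k 1}
  set C : Set (Fin n → ℝ) := {x | ∑ i, |x i| ≤ 1}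
  have hCconv : Convex ℝ C := by
    intro x hx y hy a b ha hb hab
    simp only [C, Set.mem_setOf_eq] at *
    calc ∑ i, |a * x i + b * y i| ≤ ∑ i, (a * |x i| + b * |y i|) := by
          refine Finset.sum_le_sum fun i _ => ?_
          calc |a * x i + b * y i| ≤ |a * x i| + |b * y i| := abs_add_le _ _
            _ = a * |x i| + b * |y i| := by
                rw [abs_mul, abs_mul, abs_of_nonneg ha, abs_of_nonneg hb]
      _ = a * ∑ i, |x i| + b * ∑ i, |y i| := by rw [Finset.sum_add_distrib, Finset.mul_sum, Finset.mul_sum]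
      _ ≤ a * 1 + b * 1 := by gcongr <;> assumption
      _ = 1 := by linarith
  apply le_antisymm
  · refine convexHull_min ?_ hCconv
    rintro x ⟨k, hk | hk⟩ <;> subst hk <;>
      simp [C, Pi.single_apply, apply_ite, Finset.sum_ite_eq']
  · intro x hx
    simp only [C, Set.mem_setOf_eq] at hx
    obtain ⟨s, hsdef⟩ : ∃ t : ℝ, t = ∑ i, |x i| := ⟨_, rfl⟩
    rw [← hsdef] at hx
    have hs0 : 0 ≤ s := hsdef ▸ Finset.sum_nonneg fun i _ => abs_nonneg _
    obtain ⟨r, hrdef⟩ : ∃ t : ℝ, t = (1 - s) / (2 * n) := ⟨_, rfl⟩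
    have hnpos : (0:ℝ) < 2 * n := by positivity
    have hrs : 2 * n * r = 1 - s := by rw [hrdef]; field_simp
    have hrpos : 0 ≤ r := by rw [hrdef]; apply div_nonneg (by linarith) (le_of_lt hnpos)
    set w : Fin n × Bool → ℝ := fun q =>
      if q.2 then (x q.1 + |x q.1|) / 2 + r else (|x q.1| - x q.1) / 2 + r with hw
    set z : Fin n × Bool → (Fin n → ℝ) := fun q =>
      if q.2 then Pi.single q.1 1 else -Pi.single q.1 1 with hz
    have hwt : ∀ k, w (k, true) = (x k + |x k|) / 2 + r := fun k => rfl
    have hwf : ∀ k, w (k, false) = (|x k| - x k) / 2 + r := fun k => rfl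
    have hzt : ∀ k, z (k, true) = Pi.single k 1 := fun k => rfl
    have hzf : ∀ k, z (k, false) = -Pi.single k 1 := fun k => rfl
    have hmem : ∀ q : Fin n × Bool, z q ∈ convexHull ℝ D := by
      rintro ⟨k, b⟩
      apply subset_convexHull
      cases b
      · rw [hzf]; exact ⟨k, Or.inr rfl⟩
      · rw [hzt]; exact ⟨k, Or.inl rfl⟩
    have hwnn : ∀ q : Fin n × Bool, 0 ≤ w q := by
      rintro ⟨k, b⟩
      have h1 := abs_nonneg (x k)
      have h2 := le_abs_self (x k)
      have h3 := neg_abs_le (x k)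
      cases b
      · rw [hwf]; linarith
      · rw [hwt]; linarith
    have hwsum : ∑ q : Fin n × Bool, w q = 1 := by
      rw [Fintype.sum_prod_type]
      have hb : ∀ k : Fin n, ∑ b : Bool, w (k, b) = |x k| + 2 * r := by
        intro k
        rw [Fintype.sum_bool, hwt, hwf]
        ring
      rw [Finset.sum_congr rfl fun k _ => hb k, Finset.sum_add_distrib, ← hsdef]
      simp only [Finset.sum_const, Finset.card_univ, Fintype.card_fin, nsmul_eq_mul]
      linarith [hrs]
    have hxeq : ∑ q : Fin n × Bool, w q • z q = x := by
      funext j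
      rw [Finset.sum_apply, Fintype.sum_prod_type]
      have hb : ∀ k : Fin n, ∑ b : Bool, (w (k, b) • z (k, b)) j
          = if k = j then x k else 0 := by
        intro k
        rw [Fintype.sum_bool]
        simp only [hwt, hwf, hzt, hzf, Pi.smul_apply, Pi.neg_apply, smul_eq_mul]
        by_cases h : k = j
        · subst h; rw [Pi.single_eq_same]; simp; ring
        · rw [Pi.single_eq_of_ne (Ne.symm h)]; simp [h]
      rw [Finset.sum_congr rfl fun k _ => hb k, Finset.sum_ite_eq' Finset.univ j (fun k => x k)]
      simp
    rw [← hxeq]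
    exact (convex_convexHull ℝ D).sum_mem (fun q _ => hwnn q) hwsum (fun q _ => hmem q)

open MeasureTheory Real

lemma volume_cross (n : ℕ) (hn : 1 ≤ n) :
    volume {x : Fin n → ℝ | ∑ i, |x i| ≤ 1} =
      ENNReal.ofReal (2 ^ n / n.factorial) := by
  have : Nonempty (Fin n) := ⟨⟨0, hn⟩⟩
  have h := MeasureTheory.volume_sum_rpow_le (Fin n) (p := 1) le_rfl 1
  have hset : {x : Fin n → ℝ | (∑ i, |x i| ^ (1:ℝ)) ^ (1/(1:ℝ)) ≤ 1}
      = {x : Fin n → ℝ | ∑ i, |x i| ≤ 1} := by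
    ext x
    simp [Real.rpow_one]
  rw [hset] at h
  rw [h]
  simp only [Fintype.card_fin]
  rw [ENNReal.ofReal_one, one_pow, one_mul]
  congr 1
  have h2 : Real.Gamma (1/1 + 1) = 1 := by
    norm_num [Real.Gamma_two]
  have h3 : Real.Gamma ((n:ℝ)/1 + 1) = n.factorial := by
    rw [div_one]
    exact_mod_cast Real.Gamma_nat_eq_factorial n
  rw [h2, h3]
  norm_num

/-- For any tree `T` on the vertex set `{0,1,…,n}` with `n ≥ 1`, the normalized volume of its
adjacency polytope equals `2^n`. -/
theorem nvol_adjPolytope_tree (n : ℕ) (hn : 1 ≤ n) (T : SimpleGraph (Fin (n + 1)))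
    (hT : T.IsTree) :
    (n.factorial : ENNReal) * volume (adjPolytope n T) = 2 ^ n := by
  classical
  obtain ⟨p, hp0, hadj, hedge, hit⟩ := tree_parent_exists n T hT
  set P : Matrix (Fin n) (Fin n) ℝ :=
    Matrix.of (fun j k => if p k.succ = j.succ then (1:ℝ) else 0) with hPdef
  have hPn : P ^ n = Matrix.of (fun j k => if p^[n] k.succ = j.succ then (1:ℝ) else 0) :=
    parentMatrix_pow n p hp0 n
  have hPnil : IsNilpotent P := by
    refine ⟨n, ?_⟩
    rw [hPn]
    ext j k
    simp [hit k.succ, (Fin.succ_ne_zero j).symm]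
  set A : Matrix (Fin n) (Fin n) ℝ := 1 - P with hAdef
  have hdet : A.det = 1 := det_one_sub_of_nilpotent P hPnil
  set L : (Fin n → ℝ) →ₗ[ℝ] (Fin n → ℝ) := Matrix.toLin' A with hLdef
  have hcol : ∀ k : Fin n, L (Pi.single k 1) =
      graphVert n k.succ - graphVert n (p k.succ) := by
    intro k
    funext j
    have : L (Pi.single k 1) j = A.mulVec (Pi.single k 1) j := rfl
    rw [this]
    rw [Matrix.mulVec_single]
    show A j k * 1 = _
    rw [mul_one]
    have hA : A j k = (if k = j then (1:ℝ) else 0) - (if p k.succ = j.succ then (1:ℝ) else 0) := by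
      simp [hAdef, hPdef, Matrix.one_apply, eq_comm]
    rw [hA]
    have hgv : graphVert n k.succ j = if k = j then (1:ℝ) else 0 := by
      rw [graphVert, dif_neg (Fin.succ_ne_zero k)]
      simp [Pi.single_apply, Fin.pred_succ, eq_comm]
    have hgv2 : graphVert n (p k.succ) j = if p k.succ = j.succ then (1:ℝ) else 0 := by
      rw [graphVert]
      by_cases h : p k.succ = 0
      · rw [dif_pos h]
        simp [h, (Fin.succ_ne_zero j).symm]
      · rw [dif_neg h]
        simp only [Pi.single_apply]
        congr 1
        rw [eq_iff_iff]
        constructor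
        · rintro rfl; rw [Fin.succ_pred]
        · intro he; simp only [he, Fin.pred_succ]
    simp [hgv, hgv2, mul_comm]
  -- the vertex set equals L '' D
  set D : Set (Fin n → ℝ) := {x | ∃ k, x = Pi.single k 1 ∨ x = -Pi.single k 1} with hDdef
  have hS : {v | ∃ i j : Fin (n + 1), T.Adj i j ∧ v = graphVert n i - graphVert n j}
      = L '' D := by
    ext v
    constructor
    · rintro ⟨i, j, hij, rfl⟩
      rcases hedge i j hij with ⟨hi, hpi⟩ | ⟨hj, hpj⟩
      · refine ⟨Pi.single (i.pred hi) 1, ⟨_, Or.inl rfl⟩, ?_⟩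
        rw [hcol, Fin.succ_pred, hpi]
      · refine ⟨-Pi.single (j.pred hj) 1, ⟨_, Or.inr rfl⟩, ?_⟩
        rw [map_neg, hcol, Fin.succ_pred, hpj, neg_sub]
    · rintro ⟨d, ⟨k, hk | hk⟩, rfl⟩ <;> subst hk
      · exact ⟨k.succ, p k.succ, hadj k.succ (Fin.succ_ne_zero k), hcol k⟩
      · refine ⟨p k.succ, k.succ, (hadj k.succ (Fin.succ_ne_zero k)).symm, ?_⟩
        rw [map_neg, hcol, neg_sub]
  have himg : adjPolytope n T = L '' {x : Fin n → ℝ | ∑ i, |x i| ≤ 1} := by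
    rw [adjPolytope, hS, ← LinearMap.image_convexHull, convexHull_cross n hn]
  rw [himg]
  rw [Measure.addHaar_image_linearMap]
  have hdetL : LinearMap.det L = 1 := by rw [hLdef, LinearMap.det_toLin', hdet]
  rw [hdetL, volume_cross n hn]
  simp only [abs_one, ENNReal.ofReal_one, one_mul]
  rw [← ENNReal.ofReal_natCast n.factorial, ← ENNReal.ofReal_mul (by positivity)]
  have hfac : (0:ℝ) < n.factorial := by exact_mod_cast n.factorial_pos
  have : (n.factorial : ℝ) * (2 ^ n / n.factorial) = 2 ^ n := by field_simp
  rw [this]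
  rw [ENNReal.ofReal_pow (by norm_num)]
  norm_num
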